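/- Let E be a finite-dimensional real inner product space, M a linear operator on E with ⟨M u, u⟩ ≥ ϱ‖u‖² for some ϱ > 0 and ‖M‖ ≤ m, and D a self-adjoint linear operator with 0 ≺ D ≼ I. Then for all u ∈ E, ‖u - Du + D M u‖ ≥ (ϱ/(1 + m + ϱ)) ‖u‖. -/
import Mathlib


open RealInnerProductSpace

theorem stmt_8 {E : Type*} [NormedAddCommGroup E] [InnerProductSpace ℝ E]
    [FiniteDimensional ℝ E]
    (M : E →L[ℝ] E) (D : E →ₗ[ℝ] E) (ϱ m : ℝ) (hϱ : 0 < ϱ)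
    (hM : ∀ u : E, ϱ * ‖u‖ ^ 2 ≤ ⟪M u, u⟫)
    (hm : ‖M‖ ≤ m)
    (hDsa : ∀ u v : E, ⟪D u, v⟫ = ⟪u, D v⟫)
    (hD : ∀ u : E, u ≠ 0 → 0 < ⟪D u, u⟫)
    (hDI : ∀ u : E, ⟪D u, u⟫ ≤ ‖u‖ ^ 2) :
    ∀ u : E, ϱ / (1 + m + ϱ) * ‖u‖ ≤ ‖u - D u + D (M u)‖ := by
  intro u
  have hm0 : 0 ≤ m := le_trans (norm_nonneg M) hm
  by_cases hu : u = 0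
  · simp [hu]
  set w := u - D u + D (M u) with hw
  have hDpos : ∀ v : E, 0 ≤ ⟪D v, v⟫ := by
    intro v
    by_cases hv : v = 0
    · simp [hv]
    · exact (hD v hv).le
  -- key inner product bound
  have hkey : ϱ * ‖u‖ ^ 2 ≤ ⟪w, u + M u⟫ := by
    have hexp : ⟪w, u + M u⟫ =
        (‖u‖ ^ 2 - ⟪D u, u⟫) + ⟪M u, u⟫ + ⟪D (M u), M u⟫ := by
      simp only [hw, inner_add_left, inner_add_right, inner_sub_left]
      have h1 : ⟪D (M u), u⟫ = ⟪D u, M u⟫ := by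
        rw [hDsa, real_inner_comm]
      have h2 : ⟪u, M u⟫ = ⟪M u, u⟫ := real_inner_comm _ _
      rw [h1, h2, real_inner_self_eq_norm_sq]
      ring
    rw [hexp]
    have h3 : 0 ≤ ‖u‖ ^ 2 - ⟪D u, u⟫ := sub_nonneg.mpr (hDI u)
    have h4 : ϱ * ‖u‖ ^ 2 ≤ ⟪M u, u⟫ := hM u
    have h5 : 0 ≤ ⟪D (M u), M u⟫ := hDpos _
    linarith
  have hcs : ⟪w, u + M u⟫ ≤ ‖w‖ * ‖u + M u‖ := real_inner_le_norm _ _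
  have hnorm : ‖u + M u‖ ≤ (1 + m) * ‖u‖ := by
    have := M.le_opNorm u
    have h : ‖M u‖ ≤ m * ‖u‖ :=
      this.trans (mul_le_mul_of_nonneg_right hm (norm_nonneg u))
    calc ‖u + M u‖ ≤ ‖u‖ + ‖M u‖ := norm_add_le _ _
      _ ≤ ‖u‖ + m * ‖u‖ := by linarith
      _ = (1 + m) * ‖u‖ := by ring
  have hun : 0 < ‖u‖ := norm_pos_iff.mpr hu
  have h1m : (0:ℝ) < 1 + m := by linarith
  have hkey2 : ϱ * ‖u‖ ^ 2 ≤ ‖w‖ * ((1 + m) * ‖u‖) := by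
    refine hkey.trans (hcs.trans ?_)
    exact mul_le_mul_of_nonneg_left hnorm (norm_nonneg w)
  -- divide by (1+m)‖u‖
  have hwlb : ϱ / (1 + m) * ‖u‖ ≤ ‖w‖ := by
    rw [div_mul_eq_mul_div, div_le_iff₀ h1m]
    nlinarith
  refine le_trans ?_ hwlb
  have : ϱ / (1 + m + ϱ) ≤ ϱ / (1 + m) := by
    apply div_le_div_of_nonneg_left hϱ.le h1m
    linarith
  exact mul_le_mul_of_nonneg_right this hun.le
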